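/- arXiv:2206.00512 — 2 statements merged into one kernel-verified Lean document; each statement's English description precedes it below -/
import Mathlib

section
/- Simplex failure-rule soundness: suppose x is a feasible point of the equation x_i = ∑_{j≠i} c_j·x_j with x_i < l(x_i), and for every j ≠ i, if c_j > 0 then x_j = u(x_j), and if c_j < 0 then x_j = l(x_j). Then the derived upper bound u'(x_i) := ∑_{c_j>0} c_j·u(x_j) + ∑_{c_j<0} c_j·l(x_j) satisfies u'(x_i) < l(x_i); hence no assignment satisfying the equation and the bounds l(x_j) ≤ x_j ≤ u(x_j) for j ≠ i can satisfy x_i ≥ l(x_i). -/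
theorem simplex_failure_rule_sound
    {n : ℕ} (x c l u : Fin n → ℝ) (i : Fin n)
    (heq : x i = ∑ j ∈ Finset.univ.erase i, c j * x j)
    (hviol : x i < l i)
    (hpressed : ∀ j, j ≠ i →
      (0 < c j → x j = u j) ∧ (c j < 0 → x j = l j)) :
    ((∑ j ∈ (Finset.univ.erase i).filter (fun j => 0 < c j), c j * u j) +
     (∑ j ∈ (Finset.univ.erase i).filter (fun j => c j < 0), c j * l j) < l i) ∧
    (∀ y : Fin n → ℝ,
      y i = ∑ j ∈ Finset.univ.erase i, c j * y j →
      (∀ j, j ≠ i → l j ≤ y j ∧ y j ≤ u j) →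
      ¬ (l i ≤ y i)) := by
  set S := Finset.univ.erase i with hS
  have hsplit : ∀ z : Fin n → ℝ, ∑ j ∈ S, c j * z j =
      (∑ j ∈ S.filter (fun j => 0 < c j), c j * z j) +
      (∑ j ∈ S.filter (fun j => c j < 0), c j * z j) := by
    intro z
    rw [← Finset.sum_filter_add_sum_filter_not S (fun j => 0 < c j)]
    congr 1
    rw [← Finset.sum_filter_add_sum_filter_not (S.filter (fun j => ¬ 0 < c j))
        (fun j => c j < 0), Finset.filter_filter, Finset.filter_filter]
    have h1 : (S.filter fun j => ¬0 < c j ∧ c j < 0) = S.filter (fun j => c j < 0) := by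
      apply Finset.filter_congr; intro j _; simp only [and_iff_right_iff_imp]
      intro h; exact fun h' => absurd h (asymm h')
    have h2 : ∀ j ∈ S.filter fun j => ¬0 < c j ∧ ¬c j < 0, c j * z j = 0 := by
      intro j hj
      simp only [Finset.mem_filter, not_lt] at hj
      have : c j = 0 := le_antisymm hj.2.1 hj.2.2
      simp [this]
    rw [h1, Finset.sum_eq_zero h2, add_zero]
  have hkey : (∑ j ∈ S.filter (fun j => 0 < c j), c j * u j) +
      (∑ j ∈ S.filter (fun j => c j < 0), c j * l j) = x i := by
    rw [heq, hsplit]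
    congr 1
    · apply Finset.sum_congr rfl
      intro j hj
      simp only [Finset.mem_filter] at hj
      have hji := Finset.ne_of_mem_erase hj.1
      rw [(hpressed j hji).1 hj.2]
    · apply Finset.sum_congr rfl
      intro j hj
      simp only [Finset.mem_filter] at hj
      have hji := Finset.ne_of_mem_erase hj.1
      rw [(hpressed j hji).2 hj.2]
  refine ⟨hkey ▸ hviol, fun y hyeq hyb hly => ?_⟩
  have : y i ≤ x i := by
    rw [hyeq, hsplit, ← hkey]
    apply add_le_add
    · apply Finset.sum_le_sum
      intro j hj
      simp only [Finset.mem_filter] at hj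
      have hji := Finset.ne_of_mem_erase hj.1
      exact mul_le_mul_of_nonneg_left (hyb j hji).2 hj.2.le
    · apply Finset.sum_le_sum
      intro j hj
      simp only [Finset.mem_filter] at hj
      have hji := Finset.ne_of_mem_erase hj.1
      exact mul_le_mul_of_nonpos_left (hyb j hji).1 hj.2.le
  linarith
end

section
/- Combining two Farkas certificates into an infeasibility certificate: let A be an m×n real matrix and l ≤ u bound vectors. Suppose f_u, f_l ∈ R^m are such that for all V with A·V = 0 and l ≤ V ≤ u, the row r = f_uᵀ·A satisfies u'(x_i) = max over the box of (r + e_i)·V, and the row s = f_lᵀ·A satisfies l'(x_i) = min over the box of (s + e_i)·V, where e_i is the i-th standard basis vector. If u'(x_i) < l'(x_i), then for w = f_u − f_l, the row c = wᵀ·A satisfies max over the box [l,u] of c·V ≤ u'(x_i) − l'(x_i) < 0; consequently the system A·V = 0, l ≤ V ≤ u is infeasible. -/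
/-- Box maximum of the linear functional `c · V` over the box `[l, u]`. -/
noncomputable def boxMax {n : ℕ} (l u c : Fin n → ℝ) : ℝ :=
  (∑ j ∈ Finset.univ.filter (fun j => 0 < c j), c j * u j) +
  (∑ j ∈ Finset.univ.filter (fun j => c j < 0), c j * l j)

/-- Box minimum of the linear functional `c · V` over the box `[l, u]`. -/
noncomputable def boxMin {n : ℕ} (l u c : Fin n → ℝ) : ℝ :=
  (∑ j ∈ Finset.univ.filter (fun j => 0 < c j), c j * l j) +
  (∑ j ∈ Finset.univ.filter (fun j => c j < 0), c j * u j)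

lemma boxMax_eq_sum_max {n : ℕ} (l u c : Fin n → ℝ) (hlu : ∀ j, l j ≤ u j) :
    boxMax l u c = ∑ j, max (c j * l j) (c j * u j) := by
  unfold boxMax
  rw [Finset.sum_filter, Finset.sum_filter, ← Finset.sum_add_distrib]
  apply Finset.sum_congr rfl
  intro j _
  rcases lt_trichotomy (c j) 0 with h | h | h
  · have h1 : c j * u j ≤ c j * l j := mul_le_mul_of_nonpos_left (hlu j) h.le
    rw [if_neg (by linarith), if_pos h, max_eq_left h1]; ring
  · simp [h]
  · have h1 : c j * l j ≤ c j * u j := mul_le_mul_of_nonneg_left (hlu j) h.le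
    rw [if_pos h, if_neg (by linarith), max_eq_right h1]; ring

lemma boxMin_eq_sum_min {n : ℕ} (l u c : Fin n → ℝ) (hlu : ∀ j, l j ≤ u j) :
    boxMin l u c = ∑ j, min (c j * l j) (c j * u j) := by
  unfold boxMin
  rw [Finset.sum_filter, Finset.sum_filter, ← Finset.sum_add_distrib]
  apply Finset.sum_congr rfl
  intro j _
  rcases lt_trichotomy (c j) 0 with h | h | h
  · have h1 : c j * u j ≤ c j * l j := mul_le_mul_of_nonpos_left (hlu j) h.le
    rw [if_neg (by linarith), if_pos h, min_eq_right h1]; ring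
  · simp [h]
  · have h1 : c j * l j ≤ c j * u j := mul_le_mul_of_nonneg_left (hlu j) h.le
    rw [if_pos h, if_neg (by linarith), min_eq_left h1]; ring

lemma dot_le_boxMax {n : ℕ} (l u c V : Fin n → ℝ) (hlu : ∀ j, l j ≤ u j)
    (hV : ∀ j, l j ≤ V j ∧ V j ≤ u j) :
    ∑ j, c j * V j ≤ boxMax l u c := by
  rw [boxMax_eq_sum_max l u c hlu]
  apply Finset.sum_le_sum
  intro j _
  rcases le_or_gt 0 (c j) with h | h
  · exact le_max_of_le_right (mul_le_mul_of_nonneg_left (hV j).2 h)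
  · exact le_max_of_le_left (mul_le_mul_of_nonpos_left (hV j).1 h.le)

theorem combine_farkas_certificates
    {m n : ℕ} (A : Matrix (Fin m) (Fin n) ℝ) (l u : Fin n → ℝ)
    (hlu : ∀ j, l j ≤ u j) (i : Fin n)
    (fu fl : Fin m → ℝ) (u' l' : ℝ)
    (hu' : boxMax l u (Matrix.vecMul fu A + Pi.single i 1) = u')
    (hl' : boxMin l u (Matrix.vecMul fl A + Pi.single i 1) = l')
    (hcontra : u' < l') :
    boxMax l u (Matrix.vecMul (fu - fl) A) ≤ u' - l' ∧
    ¬ ∃ V : Fin n → ℝ, A.mulVec V = 0 ∧ ∀ j, l j ≤ V j ∧ V j ≤ u j := by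
  set a : Fin n → ℝ := Matrix.vecMul fu A + Pi.single i 1 with ha
  set b : Fin n → ℝ := Matrix.vecMul fl A + Pi.single i 1 with hb
  have hc : Matrix.vecMul (fu - fl) A = a - b := by
    rw [Matrix.sub_vecMul, ha, hb]; abel
  have hmain : boxMax l u (Matrix.vecMul (fu - fl) A) ≤ u' - l' := by
    rw [hc, ← hu', ← hl', boxMax_eq_sum_max l u _ hlu, boxMax_eq_sum_max l u a hlu,
      boxMin_eq_sum_min l u b hlu, ← Finset.sum_sub_distrib]
    apply Finset.sum_le_sum
    intro j _
    have h1 : (a - b) j * l j ≤ max (a j * l j) (a j * u j) - min (b j * l j) (b j * u j) := by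
      have : (a - b) j * l j = a j * l j - b j * l j := by simp [sub_mul]
      rw [this]
      exact sub_le_sub (le_max_left _ _) (min_le_left _ _)
    have h2 : (a - b) j * u j ≤ max (a j * l j) (a j * u j) - min (b j * l j) (b j * u j) := by
      have : (a - b) j * u j = a j * u j - b j * u j := by simp [sub_mul]
      rw [this]
      exact sub_le_sub (le_max_right _ _) (min_le_right _ _)
    exact max_le h1 h2
  refine ⟨hmain, ?_⟩
  rintro ⟨V, hAV, hV⟩
  have hdot : ∑ j, Matrix.vecMul (fu - fl) A j * V j = 0 := by
    have h := (Matrix.dotProduct_mulVec (fu - fl) A V).symm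
    simp only [dotProduct] at h
    rw [h, hAV]
    simp
  have := dot_le_boxMax l u (Matrix.vecMul (fu - fl) A) V hlu hV
  linarith
end
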